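/- Let A ∈ {0,1}^{t×(n·t)} be a binary matrix with columns grouped into n ≥ 2 blocks of size t, such that every row has exactly one 1 in each block. Then there is no row vector y ∈ ℝ^{1×t} such that yA has exactly one nonzero entry. -/

import Mathlib

theorem stmt_5 (t n : ℕ) (hn : 2 ≤ n)
    (A : Matrix (Fin t) (Fin n × Fin t) ℝ)
    (hbin : ∀ τ c, A τ c = 0 ∨ A τ c = 1)
    (hone : ∀ τ ν, ∑ i : Fin t, A τ (ν, i) = 1) :
    ¬ ∃ (y : Fin t → ℝ) (c : Fin n × Fin t),
        Matrix.vecMul y A c ≠ 0 ∧ ∀ c' : Fin n × Fin t, c' ≠ c → Matrix.vecMul y A c' = 0 := by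
  rintro ⟨y, ⟨ν₀, i₀⟩, hne, hzero⟩
  have key : ∀ ν : Fin n, ∑ i : Fin t, Matrix.vecMul y A (ν, i) = ∑ τ : Fin t, y τ := by
    intro ν
    have : ∀ i : Fin t, Matrix.vecMul y A (ν, i) = ∑ τ : Fin t, y τ * A τ (ν, i) := by
      intro i; rfl
    simp_rw [this]
    rw [Finset.sum_comm]
    congr 1; ext τ
    rw [← Finset.mul_sum, hone τ ν, mul_one]
  obtain ⟨ν₁, hν₁⟩ : ∃ ν₁ : Fin n, ν₁ ≠ ν₀ := by
    have h2 : 1 < Fintype.card (Fin n) := by rw [Fintype.card_fin]; omega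
    exact Fintype.exists_ne_of_one_lt_card h2 ν₀
  have h1 : ∑ i : Fin t, Matrix.vecMul y A (ν₁, i) = 0 := by
    apply Finset.sum_eq_zero
    intro i _
    exact hzero (ν₁, i) (by simp [hν₁])
  have h0 : ∑ i : Fin t, Matrix.vecMul y A (ν₀, i) = Matrix.vecMul y A (ν₀, i₀) := by
    apply Finset.sum_eq_single_of_mem i₀ (Finset.mem_univ _)
    intro i _ hi
    exact hzero (ν₀, i) (by simp [hi])
  have := key ν₀
  rw [h0, ← key ν₁, h1] at this
  exact hne this
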